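/- The lambda function takes the following special values: λ(i) = 1/2, λ((1+i)/2) = 2, and λ(1+i) = −1. -/

import Mathlib

noncomputable def theta00 (τ : ℂ) : ℂ :=
  ∑' n : ℤ, Complex.exp (Real.pi * Complex.I * (n : ℂ) ^ 2 * τ)

/-- Theta constant `θ01(τ) = ∑_{n∈ℤ} (−1)ⁿ exp(πi n² τ)`. -/
noncomputable def theta01 (τ : ℂ) : ℂ :=
  ∑' n : ℤ, (-1 : ℂ) ^ n * Complex.exp (Real.pi * Complex.I * (n : ℂ) ^ 2 * τ)

/-- Theta constant `θ10(τ) = ∑_{n∈ℤ} exp(πi (n+1/2)² τ)`. -/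
noncomputable def theta10 (τ : ℂ) : ℂ :=
  ∑' n : ℤ, Complex.exp (Real.pi * Complex.I * ((n : ℂ) + 1/2) ^ 2 * τ)

/-- The lambda function `λ(τ) = θ10(τ)⁴ / θ00(τ)⁴`. -/
noncomputable def lambdaFn (τ : ℂ) : ℂ := theta10 τ ^ 4 / theta00 τ ^ 4

open Complex Real

lemma split₂ (h : ℤ × ℤ → ℝ) (hs : Summable h) :
    ∑' p, h p = (∑' q : ℤ × ℤ, h (q.1 + q.2, q.1 - q.2)) +
      ∑' q : ℤ × ℤ, h (q.1 + q.2 + 1, q.1 - q.2) := by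
  classical
  set S : Set (ℤ × ℤ) := {p | Even (p.1 + p.2)} with hSdef
  have hind : S.indicator h + Sᶜ.indicator h = h := S.indicator_self_add_compl h
  have h1 : Summable (S.indicator h) := hs.indicator S
  have h2 : Summable (Sᶜ.indicator h) := hs.indicator Sᶜ
  have e1 : ∑' q : ℤ × ℤ, h (q.1 + q.2, q.1 - q.2) = ∑' p, S.indicator h p := by
    have hj : Function.Injective (fun q : ℤ × ℤ => ((q.1 + q.2, q.1 - q.2) : ℤ × ℤ)) := by
      intro a b hab
      simp only [Prod.mk.injEq, Prod.ext_iff] at hab ⊢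
      omega
    rw [← hj.tsum_eq (f := S.indicator h) ?_]
    · refine tsum_congr fun q => ?_
      rw [Set.indicator_of_mem]
      exact ⟨q.1, by ring⟩
    · rintro ⟨p1, p2⟩ hp
      have hmem : Even (p1 + p2) := S.support_indicator_subset (f := h) hp
      obtain ⟨r, hr⟩ := hmem
      exact ⟨(r, p1 - r), by simp only [Prod.mk.injEq]; omega⟩
  have e2 : ∑' q : ℤ × ℤ, h (q.1 + q.2 + 1, q.1 - q.2) = ∑' p, Sᶜ.indicator h p := by
    have hj : Function.Injective (fun q : ℤ × ℤ => ((q.1 + q.2 + 1, q.1 - q.2) : ℤ × ℤ)) := by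
      intro a b hab
      simp only [Prod.mk.injEq, Prod.ext_iff] at hab ⊢
      omega
    rw [← hj.tsum_eq (f := Sᶜ.indicator h) ?_]
    · refine tsum_congr fun q => ?_
      rw [Set.indicator_of_mem]
      intro hmem
      have : Even (q.1 + q.2 + 1 + (q.1 - q.2)) := hmem
      obtain ⟨r, hr⟩ := this
      omega
    · rintro ⟨p1, p2⟩ hp
      have hmem : ¬ Even (p1 + p2) := Sᶜ.support_indicator_subset (f := h) hp
      obtain ⟨r, hr⟩ := Int.not_even_iff_odd.mp hmem
      exact ⟨(r, p1 - 1 - r), by simp only [Prod.mk.injEq]; omega⟩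
  conv_lhs => rw [← hind]
  simp only [Pi.add_apply]
  rw [Summable.tsum_add h1 h2]
  conv_rhs => rw [e1, e2]

lemma prodsum {f g : ℤ → ℝ} (hf : Summable fun n => |f n|) (hg : Summable fun n => |g n|) :
    (∑' n, f n) * (∑' n, g n) = ∑' p : ℤ × ℤ, f p.1 * g p.2 :=
  tsum_mul_tsum_of_summable_norm (by simpa [Real.norm_eq_abs] using hf)
    (by simpa [Real.norm_eq_abs] using hg)

lemma prodsummable {f g : ℤ → ℝ} (hf : Summable fun n => |f n|) (hg : Summable fun n => |g n|) :
    Summable (fun p : ℤ × ℤ => f p.1 * g p.2) :=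
  summable_mul_of_summable_norm (by simpa [Real.norm_eq_abs] using hf)
    (by simpa [Real.norm_eq_abs] using hg)

section helpers
lemma summable_gauss (c d : ℝ) (hc : 0 < c) :
    Summable (fun n : ℤ => rexp (-c * ((n : ℝ) + d) ^ 2)) := by
  have him : (0:ℝ) < ((↑(c / π) * I : ℂ)).im := by
    simp [div_pos hc Real.pi_pos]
  have h := (summable_jacobiTheta₂_term_iff (↑(c * d / π) * I) (↑(c / π) * I)).mpr him
  have hn := (summable_norm_iff.mpr h).mul_left (rexp (-c * d ^ 2))
  refine hn.congr fun n => ?_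
  rw [norm_jacobiTheta₂_term, ← Real.exp_add]
  congr 1
  have hπ : (π:ℝ) ≠ 0 := Real.pi_ne_zero
  simp only [mul_I_im, ofReal_re]
  field_simp
  ring

noncomputable def thA : ℝ := ∑' n : ℤ, rexp (-π * (n : ℝ) ^ 2)
noncomputable def thB : ℝ := ∑' n : ℤ, (-1 : ℝ) ^ n * rexp (-π * (n : ℝ) ^ 2)
noncomputable def thC : ℝ := ∑' n : ℤ, rexp (-π * ((n : ℝ) + 1/2) ^ 2)
noncomputable def thU : ℝ := ∑' n : ℤ, rexp (-(2*π) * (n : ℝ) ^ 2)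
noncomputable def thV : ℝ := ∑' n : ℤ, rexp (-(2*π) * ((n : ℝ) + 1/2) ^ 2)

lemma sF : Summable (fun n : ℤ => rexp (-π * (n : ℝ) ^ 2)) := by
  simpa using summable_gauss π 0 Real.pi_pos
lemma sH : Summable (fun n : ℤ => rexp (-π * ((n : ℝ) + 1/2) ^ 2)) :=
  summable_gauss π (1/2) Real.pi_pos
lemma sG : Summable (fun n : ℤ => rexp (-(2*π) * (n : ℝ) ^ 2)) := by
  simpa using summable_gauss (2*π) 0 (by positivity)
lemma sG' : Summable (fun n : ℤ => rexp (-(2*π) * ((n : ℝ) + 1/2) ^ 2)) :=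
  summable_gauss (2*π) (1/2) (by positivity)
lemma sG1 : Summable (fun n : ℤ => rexp (-(2*π) * ((n : ℝ) + 1) ^ 2)) :=
  summable_gauss (2*π) 1 (by positivity)

lemma thA_pos : 0 < thA := Summable.tsum_pos sF (fun i => (Real.exp_pos _).le) 0 (Real.exp_pos _)
lemma thC_pos : 0 < thC := Summable.tsum_pos sH (fun i => (Real.exp_pos _).le) 0 (Real.exp_pos _)
end helpers
lemma thB_abs : Summable (fun n : ℤ => |(-1 : ℝ) ^ n * rexp (-π * (n : ℝ) ^ 2)|) := by
  refine sF.congr fun n => ?_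
  rw [abs_mul, abs_of_pos (Real.exp_pos _)]
  rcases Int.even_or_odd n with h | h
  · rw [h.neg_one_zpow]; norm_num
  · rw [h.neg_one_zpow]; norm_num

lemma abs_of_exp {f : ℤ → ℝ} (h : ∀ n, 0 < f n) (hs : Summable f) :
    Summable (fun n => |f n|) := hs.congr fun n => (abs_of_pos (h n)).symm

lemma sFa : Summable (fun n : ℤ => |rexp (-π * (n : ℝ) ^ 2)|) :=
  abs_of_exp (fun _ => Real.exp_pos _) sF
lemma sHa : Summable (fun n : ℤ => |rexp (-π * ((n : ℝ) + 1/2) ^ 2)|) :=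
  abs_of_exp (fun _ => Real.exp_pos _) sH
lemma sGa : Summable (fun n : ℤ => |rexp (-(2*π) * (n : ℝ) ^ 2)|) :=
  abs_of_exp (fun _ => Real.exp_pos _) sG
lemma sG'a : Summable (fun n : ℤ => |rexp (-(2*π) * ((n : ℝ) + 1/2) ^ 2)|) :=
  abs_of_exp (fun _ => Real.exp_pos _) sG'
lemma sG1a : Summable (fun n : ℤ => |rexp (-(2*π) * ((n : ℝ) + 1) ^ 2)|) :=
  abs_of_exp (fun _ => Real.exp_pos _) sG1

lemma identity1 : thA * thA = thU * thU + thV * thV := by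
  rw [thA, prodsum sFa sFa, split₂ _ (prodsummable sFa sFa)]
  congr 1
  · rw [thU, prodsum sGa sGa]
    refine tsum_congr fun q => ?_
    rw [← Real.exp_add, ← Real.exp_add]
    congr 1
    push_cast
    ring
  · rw [thV, prodsum sG'a sG'a]
    refine tsum_congr fun q => ?_
    rw [← Real.exp_add, ← Real.exp_add]
    congr 1
    push_cast
    ring

lemma identity2 : thB * thB = thU * thU - thV * thV := by
  rw [thB, prodsum thB_abs thB_abs, split₂ _ (prodsummable thB_abs thB_abs)]
  have hsign : ∀ a b : ℤ, (-1 : ℝ) ^ (a + b) * (-1 : ℝ) ^ (a - b) = 1 := by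
    intro a b
    rw [← zpow_add₀ (by norm_num : (-1:ℝ) ≠ 0),
      show a + b + (a - b) = 2 * a by ring, zpow_mul]
    norm_num
  have hsign' : ∀ a b : ℤ, (-1 : ℝ) ^ (a + b + 1) * (-1 : ℝ) ^ (a - b) = -1 := by
    intro a b
    rw [← zpow_add₀ (by norm_num : (-1:ℝ) ≠ 0),
      show a + b + 1 + (a - b) = 2 * a + 1 by ring,
      zpow_add₀ (by norm_num : (-1:ℝ) ≠ 0), zpow_mul]
    norm_num
  rw [sub_eq_add_neg]
  congr 1
  · rw [thU, prodsum sGa sGa]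
    refine tsum_congr fun q => ?_
    rw [show ((-1:ℝ) ^ (q.1 + q.2) * rexp (-π * ((q.1 + q.2 : ℤ) : ℝ) ^ 2)) *
        ((-1:ℝ) ^ (q.1 - q.2) * rexp (-π * ((q.1 - q.2 : ℤ) : ℝ) ^ 2)) =
        ((-1:ℝ) ^ (q.1 + q.2) * (-1:ℝ) ^ (q.1 - q.2)) *
        (rexp (-π * ((q.1 + q.2 : ℤ) : ℝ) ^ 2) * rexp (-π * ((q.1 - q.2 : ℤ) : ℝ) ^ 2)) from by
          ring, hsign, one_mul, ← Real.exp_add, ← Real.exp_add]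
    congr 1
    push_cast
    ring
  · rw [thV, prodsum sG'a sG'a, ← tsum_neg]
    refine tsum_congr fun q => ?_
    rw [show ((-1:ℝ) ^ (q.1 + q.2 + 1) * rexp (-π * ((q.1 + q.2 + 1 : ℤ) : ℝ) ^ 2)) *
        ((-1:ℝ) ^ (q.1 - q.2) * rexp (-π * ((q.1 - q.2 : ℤ) : ℝ) ^ 2)) =
        ((-1:ℝ) ^ (q.1 + q.2 + 1) * (-1:ℝ) ^ (q.1 - q.2)) *
        (rexp (-π * ((q.1 + q.2 + 1 : ℤ) : ℝ) ^ 2) * rexp (-π * ((q.1 - q.2 : ℤ) : ℝ) ^ 2)) from by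
          ring, hsign', neg_one_mul, ← Real.exp_add, ← Real.exp_add]
    congr 2
    push_cast
    ring

lemma identity3 : thC * thC = 2 * (thU * thV) := by
  rw [thC, prodsum sHa sHa, split₂ _ (prodsummable sHa sHa), two_mul]
  congr 1
  · rw [thU, thV, mul_comm (∑' n : ℤ, rexp (-(2*π) * ((n:ℝ)) ^ 2)),
      prodsum sG'a sGa]
    refine tsum_congr fun q => ?_
    rw [← Real.exp_add, ← Real.exp_add]
    congr 1
    push_cast
    ring
  · have hshift : (∑' n : ℤ, rexp (-(2*π) * ((n : ℝ) + 1) ^ 2)) = thU := by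
      rw [thU, ← (Equiv.addRight (1:ℤ)).tsum_eq (fun n : ℤ => rexp (-(2*π) * (n : ℝ) ^ 2))]
      refine tsum_congr fun n => ?_
      simp only [Equiv.coe_addRight]
      congr 1
      push_cast
      ring
    rw [thV, ← hshift, prodsum sG1a sG'a]
    refine tsum_congr fun q => ?_
    rw [← Real.exp_add, ← Real.exp_add]
    congr 1
    push_cast
    ring


lemma neg_one_zpow_sq (n : ℤ) : (-1 : ℂ) ^ (n ^ 2) = (-1 : ℂ) ^ n := by
  rcases Int.even_or_odd n with h | h
  · have h2 : Even (n ^ 2) := (Int.even_pow.mpr ⟨h, two_ne_zero⟩)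
    rw [h.neg_one_zpow, h2.neg_one_zpow]
  · have h2 : Odd (n ^ 2) := h.pow
    rw [h.neg_one_zpow, h2.neg_one_zpow]

lemma theta00_eq (τ : ℂ) : theta00 τ = jacobiTheta₂ 0 τ := by
  refine tsum_congr fun n => ?_
  rw [jacobiTheta₂_term]
  congr 1
  ring

lemma theta01_eq (τ : ℂ) : theta01 τ = jacobiTheta₂ (1/2) τ := by
  refine tsum_congr fun n => ?_
  rw [jacobiTheta₂_term, show (2 * ↑π * Complex.I * (n:ℂ) * (1/2) + ↑π * Complex.I * (n:ℂ)^2 * τ)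
      = (n:ℂ) * (↑π * Complex.I) + ↑π * Complex.I * (n:ℂ)^2 * τ from by ring,
    Complex.exp_add, Complex.exp_int_mul, Complex.exp_pi_mul_I]

lemma theta10_eq (τ : ℂ) :
    theta10 τ = Complex.exp (↑π * Complex.I * τ / 4) * jacobiTheta₂ (τ/2) τ := by
  rw [jacobiTheta₂, ← tsum_mul_left]
  refine tsum_congr fun n => ?_
  rw [jacobiTheta₂_term, ← Complex.exp_add]
  congr 1
  ring

open Complex in
lemma exp_pi_I_int_sq (n : ℤ) : cexp (↑π * I * (n:ℂ)^2) = (-1:ℂ)^n := by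
  rw [show (↑π * I * (n:ℂ)^2) = ((n^2 : ℤ):ℂ) * (↑π * I) from by push_cast; ring,
    Complex.exp_int_mul, Complex.exp_pi_mul_I, neg_one_zpow_sq]

open Complex in
lemma theta00_T (τ : ℂ) : theta00 (τ + 1) = theta01 τ := by
  refine tsum_congr fun n => ?_
  rw [mul_add, mul_one, Complex.exp_add, exp_pi_I_int_sq, mul_comm]

open Complex in
lemma theta01_T (τ : ℂ) : theta01 (τ + 1) = theta00 τ := by
  refine tsum_congr fun n => ?_
  rw [mul_add, mul_one, Complex.exp_add, exp_pi_I_int_sq,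
    show (-1:ℂ)^n * (cexp (↑π * I * (n:ℂ)^2 * τ) * (-1)^n)
      = ((-1:ℂ)^n * (-1)^n) * cexp (↑π * I * (n:ℂ)^2 * τ) from by ring,
    ← zpow_add₀ (by norm_num : (-1:ℂ) ≠ 0), Even.neg_one_zpow ⟨n, rfl⟩, one_mul]

open Complex in
lemma theta10_T (τ : ℂ) : theta10 (τ + 1) = cexp (↑π * I / 4) * theta10 τ := by
  rw [theta10, theta10, ← tsum_mul_left]
  refine tsum_congr fun n => ?_
  have heven : Even (n^2 + n) := by
    rw [sq, ← mul_add_one]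
    exact Int.even_mul_succ_self n
  rw [show ↑π * I * ((n:ℂ) + 1/2)^2 * (τ + 1)
      = ((n^2 + n : ℤ):ℂ) * (↑π * I) + (↑π * I / 4 + ↑π * I * ((n:ℂ) + 1/2)^2 * τ) from by
        push_cast; ring,
    Complex.exp_add, Complex.exp_int_mul, Complex.exp_pi_mul_I, heven.neg_one_zpow, one_mul,
    Complex.exp_add]

open Complex in
lemma theta00_I : theta00 I = (thA : ℂ) := by
  rw [thA, Complex.ofReal_tsum]
  refine tsum_congr fun n => ?_
  rw [Complex.ofReal_exp]
  congr 1
  rw [show ↑π * I * (n:ℂ)^2 * I = ↑π * (n:ℂ)^2 * (I*I) from by ring, Complex.I_mul_I]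
  push_cast
  ring

open Complex in
lemma theta01_I : theta01 I = (thB : ℂ) := by
  rw [thB, Complex.ofReal_tsum]
  refine tsum_congr fun n => ?_
  rw [Complex.ofReal_mul, Complex.ofReal_exp, Complex.ofReal_zpow]
  push_cast
  congr 1
  rw [show ↑π * I * (n:ℂ)^2 * I = ↑π * (n:ℂ)^2 * (I*I) from by ring, Complex.I_mul_I]
  push_cast
  ring

open Complex in
lemma theta10_I : theta10 I = (thC : ℂ) := by
  rw [thC, Complex.ofReal_tsum]
  refine tsum_congr fun n => ?_
  rw [Complex.ofReal_exp]
  congr 1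
  rw [show ↑π * I * ((n:ℂ) + 1/2)^2 * I = ↑π * ((n:ℂ) + 1/2)^2 * (I*I) from by ring,
    Complex.I_mul_I]
  push_cast
  ring

open Complex in
lemma theta01_I_eq_theta10_I : theta01 I = theta10 I := by
  rw [theta01_eq, theta10_eq, jacobiTheta₂_functional_equation (1/2) I]
  rw [show (-I * I : ℂ) = 1 from by rw [neg_mul, I_mul_I, neg_neg],
    one_cpow, one_div_one, one_mul]
  rw [show (↑π * I * I / 4 : ℂ) = -↑π/4 from by rw [mul_assoc, I_mul_I]; ring,
    show (-↑π * I * (1/2 : ℂ)^2 / I) = -↑π/4 from by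
      rw [div_eq_iff Complex.I_ne_zero]; ring,
    show ((1/2 : ℂ) / I) = -(I/2) from by
      rw [div_eq_iff Complex.I_ne_zero]; linear_combination (1/2 : ℂ) * Complex.I_mul_I,
    show (-1 / I : ℂ) = I from by
      rw [div_eq_iff Complex.I_ne_zero, Complex.I_mul_I],
    jacobiTheta₂_neg_left]

open Complex in
lemma h1I : (1 + I : ℂ) ≠ 0 := fun h => by simpa using congrArg Complex.re h

open Complex in
lemma hsigma : ((1 + I)/2 : ℂ) ≠ 0 := div_ne_zero h1I two_ne_zero

open Complex in
lemma neg_inv_sigma : (-1 / ((1 + I)/2) : ℂ) = -1 + I := by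
  rw [div_eq_iff hsigma]
  linear_combination (-1/2 : ℂ) * Complex.I_mul_I

open Complex in
lemma hc_ne : (1 / (-I * ((1 + I)/2)) ^ ((1:ℂ)/2) : ℂ) ≠ 0 := by
  have hbase : (-I * ((1 + I)/2) : ℂ) ≠ 0 :=
    mul_ne_zero (neg_ne_zero.mpr Complex.I_ne_zero) hsigma
  exact one_div_ne_zero fun h => hbase ((Complex.cpow_eq_zero_iff _ _).mp h).1

open Complex in
lemma theta00_sigma :
    theta00 ((1 + I)/2) = (1 / (-I * ((1 + I)/2)) ^ ((1:ℂ)/2)) * theta00 (-1 + I) := by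
  rw [theta00_eq, jacobiTheta₂_functional_equation 0 ((1+I)/2), neg_inv_sigma, zero_div,
    ← theta00_eq]
  norm_num

open Complex in
lemma theta10_sigma :
    theta10 ((1 + I)/2) = (1 / (-I * ((1 + I)/2)) ^ ((1:ℂ)/2)) * theta01 (-1 + I) := by
  rw [theta10_eq, jacobiTheta₂_functional_equation (((1+I)/2)/2) ((1+I)/2), neg_inv_sigma,
    show ((((1+I)/2)/2) / ((1+I)/2) : ℂ) = 1/2 from by
      rw [div_eq_iff hsigma]; ring,
    show (-↑π * I * (((1+I)/2)/2)^2 / ((1+I)/2) : ℂ) = -(↑π * I * ((1+I)/2) / 4) from by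
      rw [div_eq_iff hsigma]; ring,
    ← theta01_eq,
    show cexp (↑π * I * ((1+I)/2) / 4) *
        (1 / (-I * ((1 + I)/2)) ^ ((1:ℂ)/2) * cexp (-(↑π * I * ((1+I)/2) / 4)) *
          theta01 (-1 + I))
      = (cexp (↑π * I * ((1+I)/2) / 4) * cexp (-(↑π * I * ((1+I)/2) / 4))) *
        (1 / (-I * ((1 + I)/2)) ^ ((1:ℂ)/2) * theta01 (-1 + I)) from by ring,
    ← Complex.exp_add, add_neg_cancel, Complex.exp_zero, one_mul]

open Complex in
/-- Special values of the lambda function at midpoints of Schwarz's triangle. -/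
theorem lambda_special_values :
    lambdaFn Complex.I = 1/2 ∧
    lambdaFn ((1 + Complex.I) / 2) = 2 ∧
    lambdaFn (1 + Complex.I) = -1 := by
  have hBC : thB = thC := by
    have h := theta01_I_eq_theta10_I
    rw [theta01_I, theta10_I] at h
    exact_mod_cast h
  have hA4 : thA ^ 4 = 2 * thC ^ 4 := by
    calc thA ^ 4 = (thA * thA) ^ 2 := by ring
    _ = (thU * thU - thV * thV) ^ 2 + (2 * (thU * thV)) ^ 2 := by rw [identity1]; ring
    _ = (thB * thB) ^ 2 + (thC * thC) ^ 2 := by rw [identity2, identity3]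
    _ = 2 * thC ^ 4 := by rw [hBC]; ring
  have hC0 : (thC : ℂ) ≠ 0 := Complex.ofReal_ne_zero.mpr (ne_of_gt thC_pos)
  have hA0 : (thA : ℂ) ≠ 0 := Complex.ofReal_ne_zero.mpr (ne_of_gt thA_pos)
  have hA4' : (thA : ℂ) ^ 4 = 2 * (thC : ℂ) ^ 4 := by exact_mod_cast hA4
  have h01 : theta01 (-1 + I) = theta00 I := by
    rw [← theta00_T, show (-1 + I + 1 : ℂ) = I from by ring]
  have h00 : theta00 (-1 + I) = theta01 I := by
    rw [← theta01_T, show (-1 + I + 1 : ℂ) = I from by ring]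
  refine ⟨?_, ?_, ?_⟩
  · rw [lambdaFn, theta00_I, theta10_I, hA4', show (2 * (thC:ℂ)^4 : ℂ) = (thC:ℂ)^4 * 2 from by
      ring, div_mul_eq_div_div, div_self (pow_ne_zero 4 hC0)]
  · rw [lambdaFn, theta00_sigma, theta10_sigma, h01, h00, theta00_I, theta01_I, mul_pow,
      mul_pow, mul_div_mul_left _ _ (pow_ne_zero 4 hc_ne), hA4', ← hBC, hBC, mul_div_assoc,
      div_self (pow_ne_zero 4 hC0), mul_one]
  · rw [lambdaFn, show (1 + I : ℂ) = I + 1 from by ring, theta10_T, theta00_T, theta10_I,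
      theta01_I, hBC, mul_pow, ← Complex.exp_nat_mul,
      show ((4:ℕ) * (↑π * I / 4) : ℂ) = ↑π * I from by push_cast; ring,
      Complex.exp_pi_mul_I, mul_div_assoc, div_self (pow_ne_zero 4 hC0), mul_one]
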